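/- For every N ≥ 1, every n ≥ 0, and all nonnegative integers x_0, …, x_{N−1} with ∑_k x_k = 2^n, the probability vector (x_0/2^n, …, x_{N−1}/2^n) on N states is realizable from the switch set consisting of the single N-state ½-pswitch with at most f(n,N) pswitches. -/

import Mathlib

noncomputable section

/-- Series composition: distribution of `min` of two independent states. -/
def smin {N : ℕ} (p q : Fin N → ℝ) : Fin N → ℝ :=
  fun k => ∑ i, ∑ j, if min i j = k then p i * q j else 0

/-- Parallel composition: distribution of `max` of two independent states. -/
def smax {N : ℕ} (p q : Fin N → ℝ) : Fin N → ℝ :=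
  fun k => ∑ i, ∑ j, if max i j = k then p i * q j else 0

/-- The point mass at state `s`. -/
def delta {N : ℕ} (s : Fin N) : Fin N → ℝ := fun i => if i = s then 1 else 0

/-- `Realizable S p m`: the vector `p` is obtained from point masses (0 pswitches)
and elements of the switch set `S` (1 pswitch each) by series and parallel
compositions, using `m` pswitches in total. -/
inductive Realizable {N : ℕ} (S : Set (Fin N → ℝ)) : (Fin N → ℝ) → ℕ → Prop
  | point (s : Fin N) : Realizable S (delta s) 0
  | single {p : Fin N → ℝ} : p ∈ S → Realizable S p 1
  | series {p q : Fin N → ℝ} {a b : ℕ} :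
      Realizable S p a → Realizable S q b → Realizable S (smin p q) (a + b)
  | parallel {p q : Fin N → ℝ} {a b : ℕ} :
      Realizable S p a → Realizable S q b → Realizable S (smax p q) (a + b)

/-- The `N`-state ½-pswitch: probability ½ on state `0`, ½ on state `N-1`,
and `0` elsewhere. -/
def halfSwitch (N : ℕ) : Fin N → ℝ :=
  fun i => (if (i : ℕ) = 0 then (1 : ℝ) / 2 else 0) + (if (i : ℕ) = N - 1 then (1 : ℝ) / 2 else 0)

/-- The complexity function `f(n,N)`: `2^n - 1` for `n ≤ ⌈log₂ N⌉` and
`(N-1)(n - ⌈log₂ N⌉) + 2^{⌈log₂ N⌉} - 1` for `n ≥ ⌈log₂ N⌉`. -/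
def f (n N : ℕ) : ℕ :=
  if n ≤ Nat.clog 2 N then 2 ^ n - 1
  else (N - 1) * (n - Nat.clog 2 N) + 2 ^ (Nat.clog 2 N) - 1


/-! ### Auxiliary lemmas -/

lemma f_eq (n N : ℕ) : f n N = ∑ i ∈ Finset.range n, min (N - 1) (2 ^ i) := by
  induction n with
  | zero => simp [f]
  | succ n ih =>
    rw [Finset.sum_range_succ, ← ih]
    unfold f
    rcases le_or_gt N 1 with hN | hN
    · interval_cases N <;> simp [Nat.clog] <;> intro h <;> simp [h]
    set c := Nat.clog 2 N with hc
    have hpos : 0 < 2 ^ c := Nat.pow_pos (by norm_num)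
    by_cases h1 : n + 1 ≤ c
    · have h2 : n ≤ c := by omega
      have h3 : ¬ c ≤ n := by omega
      have h4 : ¬ N ≤ 2 ^ n := by
        rw [← Nat.clog_le_iff_le_pow (by norm_num : 1 < 2)]
        exact h3
      rw [if_pos h1, if_pos h2]
      have hm : min (N-1) (2^n) = 2^n := by omega
      rw [hm]
      have : (2:ℕ)^(n+1) = 2^n * 2 := pow_succ 2 n
      omega
    · have hcn : c ≤ n := by omega
      have hN2 : N ≤ 2 ^ n :=
        le_trans (Nat.le_pow_clog (by norm_num) N) (Nat.pow_le_pow_right (by norm_num) hcn)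
      have hmin : min (N-1) (2^n) = N - 1 := by omega
      rw [if_neg h1, hmin]
      by_cases h2 : n ≤ c
      · have hnc : n = c := le_antisymm h2 hcn
        rw [if_pos h2]
        subst hnc
        simp only [Nat.sub_self, Nat.add_sub_cancel_left, mul_one]
        omega
      · rw [if_neg h2]
        have h6 : n + 1 - c = (n - c) + 1 := by omega
        rw [h6, Nat.mul_succ]
        omega

lemma f_split (n w1 w2 : ℕ) (h3 : 3 ≤ w1 + w2) (h1 : 1 ≤ w1) (h2 : 1 ≤ w2) :
    1 + f n w1 + f n w2 ≤ f (n + 1) (w1 + w2 - 1) := by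
  rw [f_eq, f_eq, f_eq, Finset.sum_range_succ']
  have hterm : ∀ i ∈ Finset.range n,
      min (w1 - 1) (2 ^ i) + min (w2 - 1) (2 ^ i) ≤ min (w1 + w2 - 1 - 1) (2 ^ (i + 1)) := by
    intro i _
    have : (2:ℕ)^(i+1) = 2^i * 2 := pow_succ 2 i
    omega
  have h0 : min (w1 + w2 - 1 - 1) (2 ^ 0) = 1 := by
    simp only [pow_zero]
    omega
  have hs := Finset.sum_le_sum hterm
  rw [Finset.sum_add_distrib] at hs
  omega

lemma smin_add_left {N : ℕ} (p1 p2 q : Fin N → ℝ) :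
    smin (fun i => p1 i + p2 i) q = fun k => smin p1 q k + smin p2 q k := by
  funext k
  simp only [smin, ← Finset.sum_add_distrib]
  refine Finset.sum_congr rfl fun i _ => Finset.sum_congr rfl fun j _ => ?_
  split_ifs <;> ring

lemma smin_smul_left {N : ℕ} (c : ℝ) (p q : Fin N → ℝ) :
    smin (fun i => c * p i) q = fun k => c * smin p q k := by
  funext k
  simp only [smin, Finset.mul_sum]
  refine Finset.sum_congr rfl fun i _ => Finset.sum_congr rfl fun j _ => ?_
  split_ifs <;> ring

lemma smax_add_right {N : ℕ} (p q1 q2 : Fin N → ℝ) :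
    smax p (fun j => q1 j + q2 j) = fun k => smax p q1 k + smax p q2 k := by
  funext k
  simp only [smax, ← Finset.sum_add_distrib]
  refine Finset.sum_congr rfl fun i _ => Finset.sum_congr rfl fun j _ => ?_
  split_ifs <;> ring

lemma smax_smul_right {N : ℕ} (c : ℝ) (p q : Fin N → ℝ) :
    smax p (fun j => c * q j) = fun k => c * smax p q k := by
  funext k
  simp only [smax, Finset.mul_sum]
  refine Finset.sum_congr rfl fun i _ => Finset.sum_congr rfl fun j _ => ?_
  split_ifs <;> ring

lemma smin_delta_left {N : ℕ} (s : Fin N) (q : Fin N → ℝ) :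
    smin (delta s) q = fun k => ∑ j, if min s j = k then q j else 0 := by
  funext k
  simp only [smin]
  rw [Finset.sum_eq_single_of_mem s (Finset.mem_univ s)]
  · refine Finset.sum_congr rfl fun j _ => ?_
    simp [delta]
  · intro i _ hi
    apply Finset.sum_eq_zero
    intro j _
    simp [delta, hi]

lemma smin_delta_bot {N : ℕ} (s : Fin N) (q : Fin N → ℝ) (hs : ∀ j, s ≤ j)
    (hq : ∑ j, q j = 1) : smin (delta s) q = delta s := by
  rw [smin_delta_left]
  funext k
  have : ∀ j : Fin N, min s j = s := fun j => min_eq_left (hs j)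
  simp only [this, delta]
  rcases eq_or_ne s k with h | h
  · simp [h, eq_comm, hq]
  · simp [h, Ne.symm h]

lemma smin_delta_top {N : ℕ} (s : Fin N) (q : Fin N → ℝ) (hs : ∀ j, j ≤ s) :
    smin (delta s) q = q := by
  rw [smin_delta_left]
  funext k
  have : ∀ j : Fin N, min s j = j := fun j => min_eq_right (hs j)
  simp only [this]
  exact Finset.sum_ite_eq' Finset.univ k q |>.trans (by simp)

lemma smax_delta_right {N : ℕ} (s : Fin N) (p : Fin N → ℝ) :
    smax p (delta s) = fun k => ∑ i, if max i s = k then p i else 0 := by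
  funext k
  simp only [smax]
  refine Finset.sum_congr rfl fun i _ => ?_
  rw [Finset.sum_eq_single_of_mem s (Finset.mem_univ s)]
  · simp [delta]
  · intro j _ hj
    simp [delta, hj]

lemma smax_delta_right_bot {N : ℕ} (s : Fin N) (p : Fin N → ℝ) (hs : ∀ i, s ≤ i) :
    smax p (delta s) = p := by
  rw [smax_delta_right]
  funext k
  have : ∀ i : Fin N, max i s = i := fun i => max_eq_left (hs i)
  simp only [this]
  exact Finset.sum_ite_eq' Finset.univ k p |>.trans (by simp)

lemma smax_support {N : ℕ} (p q : Fin N → ℝ) (t : Fin N)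
    (hp : ∀ i, p i ≠ 0 → i ≤ t) (hq : ∀ j, q j ≠ 0 → t ≤ j)
    (hps : ∑ i, p i = 1) : smax p q = q := by
  funext k
  simp only [smax]
  have step : ∀ i j : Fin N, (if max i j = k then p i * q j else 0)
      = if j = k then p i * q j else 0 := by
    intro i j
    by_cases hpq : p i * q j = 0
    · simp [hpq]
    · have hi : p i ≠ 0 := fun h => hpq (by simp [h])
      have hj : q j ≠ 0 := fun h => hpq (by simp [h])
      have : max i j = j := max_eq_right ((hp i hi).trans (hq j hj))
      rw [this]
  simp only [step]
  calc (∑ i, ∑ j, if j = k then p i * q j else 0) = ∑ i, p i * q k := by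
        refine Finset.sum_congr rfl fun i _ => ?_
        rw [Finset.sum_ite_eq' Finset.univ k fun j => p i * q j]
        simp
    _ = q k := by rw [← Finset.sum_mul, hps, one_mul]

lemma halfSwitch_decomp {N : ℕ} (hN : 0 < N) :
    halfSwitch N = fun i =>
      (1/2 : ℝ) * delta (⟨0, hN⟩ : Fin N) i + (1/2 : ℝ) * delta (⟨N-1, by omega⟩ : Fin N) i := by
  funext i
  simp only [halfSwitch, delta, Fin.ext_iff]
  split_ifs <;> norm_num

/-- The key combination identity. -/
lemma combo {N : ℕ} (hN : 0 < N) (t : Fin N) (py pz : Fin N → ℝ)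
    (hys : ∑ i, py i = 1) (hzs : ∑ i, pz i = 1)
    (hy : ∀ i, py i ≠ 0 → i ≤ t) (hz : ∀ j, pz j ≠ 0 → t ≤ j) :
    smax py (smin (halfSwitch N) pz) = fun k => py k / 2 + pz k / 2 := by
  have hbot : ∀ j : Fin N, (⟨0, hN⟩ : Fin N) ≤ j := fun j => Fin.mk_le_of_le_val (Nat.zero_le _)
  have htop : ∀ j : Fin N, j ≤ (⟨N - 1, by omega⟩ : Fin N) := by
    intro j; rw [Fin.le_def]; exact Nat.le_sub_one_of_lt j.isLt
  have h1 : smin (halfSwitch N) pz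
      = fun k => (1/2 : ℝ) * delta (⟨0, hN⟩ : Fin N) k + (1/2 : ℝ) * pz k := by
    rw [halfSwitch_decomp hN, smin_add_left, smin_smul_left, smin_smul_left,
      smin_delta_bot _ _ hbot hzs, smin_delta_top _ _ htop]
  rw [h1, smax_add_right, smax_smul_right, smax_smul_right,
    smax_delta_right_bot _ _ hbot, smax_support py pz t hy hz hys]
  funext k
  ring

lemma BNS.point_mass {N : ℕ} (x : Fin N → ℕ) (s : Fin N) (c : ℕ) (hc : 0 < c)
    (hxs : x s = c) (h0 : ∀ k, k ≠ s → x k = 0) :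
    (fun k => (x k : ℝ) / (c : ℝ)) = delta s := by
  funext k
  rcases eq_or_ne k s with rfl | h
  · have : (c : ℝ) ≠ 0 := Nat.cast_ne_zero.mpr hc.ne'
    simp [hxs, delta, this]
  · simp [h0 k h, delta, h]

lemma BNS.sum_one_point {N : ℕ} (x : Fin N → ℕ) (hsum : ∑ k, x k = 1) :
    ∃ s : Fin N, x s = 1 ∧ ∀ k, k ≠ s → x k = 0 := by
  obtain ⟨s, -, hs⟩ := Finset.exists_ne_zero_of_sum_ne_zero (by rw [hsum]; norm_num :
    ∑ k, x k ≠ 0)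
  have key := Finset.add_sum_erase Finset.univ x (Finset.mem_univ s)
  rw [hsum] at key
  have h0 : ∀ k ∈ Finset.univ.erase s, x k = 0 := by
    intro k hk
    have hle : x k ≤ ∑ j ∈ Finset.univ.erase s, x j :=
      Finset.single_le_sum (fun _ _ => Nat.zero_le _) hk
    omega
  refine ⟨s, by omega, fun k hk => h0 k (Finset.mem_erase.mpr ⟨hk, Finset.mem_univ k⟩)⟩

lemma BNS.main {N : ℕ} (hN : 0 < N) (n : ℕ) : ∀ (l r : ℕ), l ≤ r → r < N →
    ∀ x : Fin N → ℕ, (∀ k : Fin N, x k ≠ 0 → l ≤ (k : ℕ) ∧ (k : ℕ) ≤ r) →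
    ∑ k, x k = 2 ^ n →
    ∃ m ≤ f n (r - l + 1), Realizable {halfSwitch N} (fun k => (x k : ℝ) / 2 ^ n) m := by
  induction n with
  | zero =>
    intro l r _ _ x _ hsum
    obtain ⟨s, hs1, hs0⟩ := BNS.sum_one_point x (by simpa using hsum)
    refine ⟨0, Nat.zero_le _, ?_⟩
    have hpm := BNS.point_mass x s 1 one_pos hs1 hs0
    have : (fun k => (x k : ℝ) / 2 ^ 0) = delta s := by
      simpa using hpm
    rw [this]
    exact Realizable.point s
  | succ n ih =>
    intro l r hlr hrN x hsupp hsum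
    rcases eq_or_lt_of_le hlr with heq | hltr
    · -- single state: point mass
      subst heq
      set s : Fin N := ⟨l, by omega⟩ with hs
      have h0 : ∀ k, k ≠ s → x k = 0 := by
        intro k hk
        by_contra hx
        have h2 := hsupp k hx
        exact hk (Fin.ext (show (k : ℕ) = l by omega))
      have hxs : x s = 2 ^ (n + 1) := by
        have key := Finset.add_sum_erase Finset.univ x (Finset.mem_univ s)
        rw [hsum] at key
        have : ∑ k ∈ Finset.univ.erase s, x k = 0 :=
          Finset.sum_eq_zero fun k hk => h0 k (Finset.mem_erase.mp hk).1
        omega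
      refine ⟨0, Nat.zero_le _, ?_⟩
      have hpm := BNS.point_mass x s (2 ^ (n + 1)) (Nat.pow_pos two_pos) hxs h0
      have : (fun k => (x k : ℝ) / 2 ^ (n + 1)) = delta s := by
        rw [← hpm]; push_cast; rfl
      rw [this]
      exact Realizable.point s
    · -- split
      set Q : ℕ → ℕ := fun jj => ∑ k : Fin N, if (k : ℕ) < jj then x k else 0 with hQ
      have hQr : Q (r + 1) = 2 ^ (n + 1) := by
        rw [hQ, ← hsum]
        refine Finset.sum_congr rfl fun k _ => ?_
        split_ifs with h
        · rfl
        · rcases Nat.eq_zero_or_pos (x k) with h0 | h0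
          · exact h0.symm
          · exact absurd (hsupp k (by omega)).2 (by omega)
      have exP : ∃ jj, 2 ^ n ≤ Q (jj + 1) :=
        ⟨r, by rw [hQr]; exact Nat.pow_le_pow_right (by norm_num) (by omega)⟩
      set t : ℕ := Nat.find exP with htdef
      have ht1 : 2 ^ n ≤ Q (t + 1) := Nat.find_spec exP
      have htr : t ≤ r := Nat.find_le (by rw [hQr]; exact Nat.pow_le_pow_right (by norm_num) (by omega))
      have htQ : Q t ≤ 2 ^ n := by
        rcases Nat.eq_zero_or_pos t with h0 | h0
        · rw [h0]; simp [hQ]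
        · have hmin := Nat.find_min exP (show t - 1 < t by omega)
          rw [show t - 1 + 1 = t by omega] at hmin
          omega
      have htl : l ≤ t := by
        by_contra hlt
        push_neg at hlt
        have h0 : Q (t + 1) = 0 := Finset.sum_eq_zero fun k _ => by
          split_ifs with h
          · by_contra hx
            have := (hsupp k (by omega)).1
            omega
          · rfl
        have := Nat.pow_pos (n := n) (show 0 < 2 by norm_num)
        omega
      set tF : Fin N := ⟨t, by omega⟩ with htF
      have hQt1 : Q (t + 1) = Q t + x tF := by
        have hsplit : ∀ k : Fin N, (if (k : ℕ) < t + 1 then x k else 0)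
            = (if (k : ℕ) < t then x k else 0) + (if k = tF then x k else 0) := by
          intro k
          simp only [Fin.ext_iff, htF, Fin.val_mk]
          split_ifs <;> omega
        rw [hQ]
        simp only [hsplit, Finset.sum_add_distrib]
        congr 1
        rw [Finset.sum_ite_eq' Finset.univ tF x]
        simp
      set a : ℕ := 2 ^ n - Q t with ha
      have haxt : a ≤ x tF := by omega
      set y : Fin N → ℕ := fun k => if (k : ℕ) < t then x k else if k = tF then a else 0 with hy
      set z : Fin N → ℕ := fun k => x k - y k with hz
      have hyx : ∀ k, y k ≤ x k := by
        intro k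
        show (if (k : ℕ) < t then x k else if k = tF then a else 0) ≤ x k
        split_ifs with h1 h2
        · exact le_refl _
        · rw [h2]; exact haxt
        · exact Nat.zero_le _
      have hyzx : ∀ k, y k + z k = x k := fun k => by
        have h1 := hyx k
        have h2 : z k = x k - y k := rfl
        omega
      have hysum : ∑ k, y k = 2 ^ n := by
        have hsplit : ∀ k : Fin N, y k
            = (if (k : ℕ) < t then x k else 0) + (if k = tF then a else 0) := by
          intro k
          rw [hy]
          simp only [Fin.ext_iff, htF, Fin.val_mk]
          split_ifs <;> omega
        simp only [hsplit, Finset.sum_add_distrib]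
        rw [Finset.sum_ite_eq' Finset.univ tF (fun _ => a)]
        simp only [Finset.mem_univ, if_true]
        have : (∑ k : Fin N, if (k : ℕ) < t then x k else 0) = Q t := rfl
        omega
      have hzsum : ∑ k, z k = 2 ^ n := by
        have : ∑ k, (y k + z k) = 2 ^ (n + 1) := by
          rw [Finset.sum_congr rfl fun k _ => hyzx k, hsum]
        rw [Finset.sum_add_distrib] at this
        have h2 : (2:ℕ) ^ (n+1) = 2 ^ n * 2 := pow_succ 2 n
        omega
      have hysupp : ∀ k : Fin N, y k ≠ 0 → l ≤ (k : ℕ) ∧ (k : ℕ) ≤ t := by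
        intro k hk
        have hk' : (if (k : ℕ) < t then x k else if k = tF then a else 0) ≠ 0 := hk
        split_ifs at hk' with h1 h2
        · exact ⟨(hsupp k hk').1, by omega⟩
        · have hkt : (k : ℕ) = t := by rw [h2]
          exact ⟨by omega, by omega⟩
        · exact absurd rfl hk'
      have hzsupp : ∀ k : Fin N, z k ≠ 0 → t ≤ (k : ℕ) ∧ (k : ℕ) ≤ r := by
        intro k hk
        have hzk : z k = x k - y k := rfl
        have hxk : x k ≠ 0 := by
          intro h; apply hk; have := hyx k; omega
        constructor
        · by_contra h
          push_neg at h
          apply hk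
          have hyk : y k = x k := by
            show (if (k : ℕ) < t then x k else if k = tF then a else 0) = x k
            rw [if_pos h]
          omega
        · exact (hsupp k hxk).2
      obtain ⟨m1, hm1, hre1⟩ := ih l t htl (by omega) y hysupp hysum
      obtain ⟨m2, hm2, hre2⟩ := ih t r htr hrN z hzsupp hzsum
      set py : Fin N → ℝ := fun k => (y k : ℝ) / 2 ^ n with hpy
      set pz : Fin N → ℝ := fun k => (z k : ℝ) / 2 ^ n with hpz
      have hpow : ((2 : ℝ) ^ n) ≠ 0 := by positivity
      have hpys : ∑ i, py i = 1 := by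
        show (∑ i : Fin N, (y i : ℝ) / 2 ^ n) = 1
        rw [← Finset.sum_div, ← Nat.cast_sum, hysum]
        push_cast
        exact div_self hpow
      have hpzs : ∑ i, pz i = 1 := by
        show (∑ i : Fin N, (z i : ℝ) / 2 ^ n) = 1
        rw [← Finset.sum_div, ← Nat.cast_sum, hzsum]
        push_cast
        exact div_self hpow
      have hpy0 : ∀ i, py i ≠ 0 → i ≤ tF := by
        intro i hi
        have : y i ≠ 0 := by
          intro h
          apply hi
          show (y i : ℝ) / 2 ^ n = 0
          simp [h]
        exact Fin.le_def.mpr (hysupp i this).2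
      have hpz0 : ∀ j, pz j ≠ 0 → tF ≤ j := by
        intro j hj
        have : z j ≠ 0 := by
          intro h
          apply hj
          show (z j : ℝ) / 2 ^ n = 0
          simp [h]
        exact Fin.le_def.mpr (hzsupp j this).1
      have hhalf : Realizable {halfSwitch N} (halfSwitch N) 1 :=
        Realizable.single rfl
      have hcomb := Realizable.parallel hre1 (Realizable.series hhalf hre2)
      have hcombo := combo hN tF py pz hpys hpzs hpy0 hpz0
      have heq : (fun k => (x k : ℝ) / 2 ^ (n + 1)) = smax py (smin (halfSwitch N) pz) := by
        rw [hcombo]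
        funext k
        rw [← hyzx k]
        show ((y k + z k : ℕ) : ℝ) / 2 ^ (n + 1) = (y k : ℝ) / 2 ^ n / 2 + (z k : ℝ) / 2 ^ n / 2
        push_cast
        have h2 : (2:ℝ) ^ (n+1) = 2 ^ n * 2 := pow_succ 2 n
        rw [h2]
        field_simp
      refine ⟨m1 + (1 + m2), ?_, by rw [heq]; exact hcomb⟩
      have harg : (t - l + 1) + (r - t + 1) - 1 = r - l + 1 := by omega
      have hsp := f_split n (t - l + 1) (r - t + 1) (by omega) (by omega) (by omega)
      rw [harg] at hsp
      omega


/-- Binary `N`-state distributions: every `(x₀/2^n, …, x_{N-1}/2^n)` is realizable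
from the switch set consisting of the single `N`-state ½-pswitch using at most
`f(n,N)` pswitches. -/
theorem binary_N_state (N : ℕ) (hN : 1 ≤ N) (n : ℕ) (x : Fin N → ℕ)
    (hx : ∑ k, x k = 2 ^ n) :
    ∃ m ≤ f n N, Realizable {halfSwitch N} (fun k => (x k : ℝ) / 2 ^ n) m := by
  have h := BNS.main (by omega : 0 < N) n 0 (N - 1) (by omega) (by omega) x
    (fun k _ => ⟨Nat.zero_le _, by omega⟩) hx
  rwa [show N - 1 - 0 + 1 = N by omega] at h

end
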